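/- For all F = F₀ + F_v and G = G₀ + G_v in ℍ_ℂ, the characteristic polynomial of the Sylvester operator S_{F,G}, regarded as a ℂ-linear endomorphism of the 4-dimensional ℂ-vector space ℍ_ℂ, equals ((X − (F₀ + G₀))² + F_v^s + G_v^s)² − 4·F_v^s·G_v^s in ℂ[X]. (Equivalently, the four eigenvalues of S_{F,G}, counted with multiplicity, are F₀ + G₀ ± 𝕚(a ± b) for any fixed a, b ∈ ℂ with a² = F_v^s and b² = G_v^s.) -/

import Mathlib

open Quaternion Polynomial

/-- The Sylvester operator `S_{F,G}(z) = Fz + zG` as a `ℂ`-linear endomorphism of the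
complex quaternions. -/
noncomputable def sylvesterOp (F G : Quaternion ℂ) : Quaternion ℂ →ₗ[ℂ] Quaternion ℂ :=
  letI : SMulCommClass ℂ ℍ[ℂ] ℍ[ℂ] := Algebra.to_smulCommClass (R := ℂ) (A := ℍ[ℂ])
  letI : IsScalarTower ℂ ℍ[ℂ] ℍ[ℂ] := IsScalarTower.right (R := ℂ) (A := ℍ[ℂ])
  LinearMap.mulLeft ℂ F + LinearMap.mulRight ℂ G

set_option maxHeartbeats 2000000 in
theorem my_det_fin_four {R : Type*} [CommRing R] (M : Matrix (Fin 4) (Fin 4) R) :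
    M.det =
      M 0 0 * M 1 1 * M 2 2 * M 3 3 - M 0 0 * M 1 1 * M 2 3 * M 3 2 -
        M 0 0 * M 1 2 * M 2 1 * M 3 3 + M 0 0 * M 1 2 * M 2 3 * M 3 1 +
        M 0 0 * M 1 3 * M 2 1 * M 3 2 - M 0 0 * M 1 3 * M 2 2 * M 3 1 -
        M 0 1 * M 1 0 * M 2 2 * M 3 3 + M 0 1 * M 1 0 * M 2 3 * M 3 2 +
        M 0 1 * M 1 2 * M 2 0 * M 3 3 - M 0 1 * M 1 2 * M 2 3 * M 3 0 -
        M 0 1 * M 1 3 * M 2 0 * M 3 2 + M 0 1 * M 1 3 * M 2 2 * M 3 0 +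
        M 0 2 * M 1 0 * M 2 1 * M 3 3 - M 0 2 * M 1 0 * M 2 3 * M 3 1 -
        M 0 2 * M 1 1 * M 2 0 * M 3 3 + M 0 2 * M 1 1 * M 2 3 * M 3 0 +
        M 0 2 * M 1 3 * M 2 0 * M 3 1 - M 0 2 * M 1 3 * M 2 1 * M 3 0 -
        M 0 3 * M 1 0 * M 2 1 * M 3 2 + M 0 3 * M 1 0 * M 2 2 * M 3 1 +
        M 0 3 * M 1 1 * M 2 0 * M 3 2 - M 0 3 * M 1 1 * M 2 2 * M 3 0 -
        M 0 3 * M 1 2 * M 2 0 * M 3 1 + M 0 3 * M 1 2 * M 2 1 * M 3 0 := by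
  rw [Matrix.det_succ_row_zero, Fin.sum_univ_four]
  simp only [Matrix.det_fin_three, Matrix.submatrix_apply,
    show ((0:Fin 4).succAbove 0 = 1) from rfl, show ((0:Fin 4).succAbove 1 = 2) from rfl,
    show ((0:Fin 4).succAbove 2 = 3) from rfl,
    show ((1:Fin 4).succAbove 0 = 0) from rfl, show ((1:Fin 4).succAbove 1 = 2) from rfl,
    show ((1:Fin 4).succAbove 2 = 3) from rfl,
    show ((2:Fin 4).succAbove 0 = 0) from rfl, show ((2:Fin 4).succAbove 1 = 1) from rfl,
    show ((2:Fin 4).succAbove 2 = 3) from rfl,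
    show ((3:Fin 4).succAbove 0 = 0) from rfl, show ((3:Fin 4).succAbove 1 = 1) from rfl,
    show ((3:Fin 4).succAbove 2 = 2) from rfl,
    show (Fin.succ 0 : Fin 4) = 1 from rfl, show (Fin.succ 1 : Fin 4) = 2 from rfl,
    show (Fin.succ 2 : Fin 4) = 3 from rfl,
    Fin.val_zero, Fin.val_one, pow_zero, pow_one,
    show ((2:Fin 4):ℕ) = 2 from rfl, show ((3:Fin 4):ℕ) = 3 from rfl]
  norm_num
  ring


noncomputable def qBasis : Module.Basis (Fin 4) ℂ (Quaternion ℂ) :=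
  Module.Basis.ofEquivFun
    { toFun := fun q => ![q.re, q.imI, q.imJ, q.imK]
      invFun := fun f => ⟨f 0, f 1, f 2, f 3⟩
      left_inv := fun q => rfl
      right_inv := fun f => by funext i; fin_cases i <;> rfl
      map_add' := fun p q => by funext i; fin_cases i <;> rfl
      map_smul' := fun c q => by funext i; fin_cases i <;> rfl }

@[simp] theorem qBasis_repr (q : Quaternion ℂ) : qBasis.repr q = ![q.re, q.imI, q.imJ, q.imK] := rfl
theorem qBasis_re (i : Fin 4) : (qBasis i).re = Pi.single (M := fun _ => ℂ) i 1 0 := by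
  unfold qBasis; rw [Module.Basis.coe_ofEquivFun]; rfl
theorem qBasis_imI (i : Fin 4) : (qBasis i).imI = Pi.single (M := fun _ => ℂ) i 1 1 := by
  unfold qBasis; rw [Module.Basis.coe_ofEquivFun]; rfl
theorem qBasis_imJ (i : Fin 4) : (qBasis i).imJ = Pi.single (M := fun _ => ℂ) i 1 2 := by
  unfold qBasis; rw [Module.Basis.coe_ofEquivFun]; rfl
theorem qBasis_imK (i : Fin 4) : (qBasis i).imK = Pi.single (M := fun _ => ℂ) i 1 3 := by
  unfold qBasis; rw [Module.Basis.coe_ofEquivFun]; rfl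

set_option maxHeartbeats 2000000 in
/-- The characteristic polynomial of the Sylvester operator `S_{F,G}` equals
`((X − (F₀+G₀))² + F_v^s + G_v^s)² − 4 F_v^s G_v^s` in `ℂ[X]`. -/
theorem sylvester_charpoly (F G : Quaternion ℂ) :
    LinearMap.charpoly (sylvesterOp F G) =
      ((X - C (F.re + G.re)) ^ 2 + C (normSq F.im + normSq G.im)) ^ 2 -
        C (4 * normSq F.im * normSq G.im) := by
  rw [← LinearMap.charpoly_toMatrix (sylvesterOp F G) qBasis]
  have hM : LinearMap.toMatrix qBasis qBasis (sylvesterOp F G) =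
      !![F.re + G.re, -(F.imI + G.imI), -(F.imJ + G.imJ), -(F.imK + G.imK);
         F.imI + G.imI, F.re + G.re, G.imK - F.imK, F.imJ - G.imJ;
         F.imJ + G.imJ, F.imK - G.imK, F.re + G.re, G.imI - F.imI;
         F.imK + G.imK, G.imJ - F.imJ, F.imI - G.imI, F.re + G.re] := by
    ext i j
    fin_cases i <;> fin_cases j <;>
      · simp [LinearMap.toMatrix_apply, sylvesterOp, qBasis_repr, qBasis_re, qBasis_imI, qBasis_imJ, qBasis_imK,
          Pi.single, Function.update,
          Quaternion.re_mul, Quaternion.imI_mul, Quaternion.imJ_mul, Quaternion.imK_mul]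
        try ring
  have hF : normSq F.im = F.imI ^ 2 + F.imJ ^ 2 + F.imK ^ 2 := by
    simp [Quaternion.normSq_def']
  have hG : normSq G.im = G.imI ^ 2 + G.imJ ^ 2 + G.imK ^ 2 := by
    simp [Quaternion.normSq_def']
  have hC : (!![F.re + G.re, -(F.imI + G.imI), -(F.imJ + G.imJ), -(F.imK + G.imK);
         F.imI + G.imI, F.re + G.re, G.imK - F.imK, F.imJ - G.imJ;
         F.imJ + G.imJ, F.imK - G.imK, F.re + G.re, G.imI - F.imI;
         F.imK + G.imK, G.imJ - F.imJ, F.imI - G.imI, F.re + G.re]).charmatrix =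
      !![X - C (F.re + G.re), C (F.imI + G.imI), C (F.imJ + G.imJ), C (F.imK + G.imK);
         -C (F.imI + G.imI), X - C (F.re + G.re), -C (G.imK - F.imK), -C (F.imJ - G.imJ);
         -C (F.imJ + G.imJ), -C (F.imK - G.imK), X - C (F.re + G.re), -C (G.imI - F.imI);
         -C (F.imK + G.imK), -C (G.imJ - F.imJ), -C (F.imI - G.imI), X - C (F.re + G.re)] := by
    ext i j
    fin_cases i <;> fin_cases j <;> simp [Matrix.charmatrix_apply]
  rw [hM, Matrix.charpoly, hC, hF, hG, my_det_fin_four]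
  simp [map_add, map_sub, map_mul, map_pow, map_neg, map_ofNat]
  ring
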